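/- Let $p \geq 2$ and let $X, Y$ be random vectors in $\mathbb{R}^d$ with finite $p$-th moments. Then $\|X+Y\|_p^2 + \|X-Y\|_p^2 \leq 2\|X\|_p^2 + 2(p-1)\|Y\|_p^2$, where $\|Z\|_p = (\mathbb{E}[|Z|^p])^{1/p}$ and $|\cdot|$ is the Euclidean norm. -/

import Mathlib

open Real

/-- concavity: `u^s + v^s ≤ 2^(1-s) (u+v)^s` for `0 < s ≤ 1`. -/
lemma bcl_l1 {u v s : ℝ} (hu : 0 ≤ u) (hv : 0 ≤ v) (hs : 0 < s) (hs1 : s ≤ 1) :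
    u ^ s + v ^ s ≤ 2 ^ (1 - s) * (u + v) ^ s := by
  lift u to NNReal using hu
  lift v to NNReal using hv
  have key : (u : NNReal) ^ s + v ^ s ≤ 2 ^ (1 - s) * (u + v) ^ s := by
    have h1 : (1 : ℝ) ≤ 1 / s := by
      rw [le_div_iff₀ hs]; linarith
    have h := NNReal.rpow_add_le_mul_rpow_add_rpow (u ^ s) (v ^ s) h1
    have e2 : ((u ^ s) ^ (1 / s)) = u := by
      rw [← NNReal.rpow_mul, mul_one_div, div_self hs.ne', NNReal.rpow_one]
    have e3 : ((v ^ s) ^ (1 / s)) = v := by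
      rw [← NNReal.rpow_mul, mul_one_div, div_self hs.ne', NNReal.rpow_one]
    rw [e2, e3] at h
    have h2 := NNReal.rpow_le_rpow h hs.le
    have e1 : ((u ^ s + v ^ s) ^ (1 / s)) ^ s = u ^ s + v ^ s := by
      rw [← NNReal.rpow_mul, one_div, inv_mul_cancel₀ hs.ne', NNReal.rpow_one]
    rw [e1] at h2
    calc (u : NNReal) ^ s + v ^ s ≤ ((2:NNReal) ^ (1/s - 1) * (u + v)) ^ s := h2
    _ = 2 ^ (1 - s) * (u + v) ^ s := by
        rw [NNReal.mul_rpow, ← NNReal.rpow_mul]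
        congr 1
        congr 1
        field_simp
  calc (u : ℝ) ^ s + (v : ℝ) ^ s = ((u ^ s + v ^ s : NNReal) : ℝ) := by
        push_cast [NNReal.coe_rpow]; ring
    _ ≤ ((2 ^ (1 - s) * (u + v) ^ s : NNReal) : ℝ) := by exact_mod_cast key
    _ = 2 ^ (1 - s) * ((u:ℝ) + v) ^ s := by push_cast [NNReal.coe_rpow]; ring

/-- the normalized two-point inequality, main statement. -/
def BCLMain (p : ℝ) : Prop :=
  ∀ t : ℝ, 0 ≤ t → t ≤ 1 → (1+t) ^ p + (1-t) ^ p ≤ 2 * (1+(p-1)*t^2) ^ (p/2)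

lemma bcl_K2 {q t : ℝ} (hq : 1 ≤ q) (ht0 : 0 ≤ t) (ht1 : t ≤ 1)
    (hmain : 3 < q → BCLMain (q-1)) :
    (1+t) ^ (q-1) + (1-t) ^ (q-1)
      ≤ 2 * (1+q*t^2) ^ ((q-3)/2) * (1+q^2*t^2) := by
  have hb : (0:ℝ) < 1 + q*t^2 := by nlinarith [sq_nonneg t]
  have hb1 : (1:ℝ) ≤ 1 + q*t^2 := by nlinarith [sq_nonneg t]
  have hstep : 2 * (1+q*t^2) ^ ((q-1)/2) ≤ 2 * (1+q*t^2) ^ ((q-3)/2) * (1+q^2*t^2) := by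
    have e : (1+q*t^2) ^ ((q-1)/2) = (1+q*t^2) ^ ((q-3)/2) * (1+q*t^2) := by
      rw [show (q-1)/2 = (q-3)/2 + 1 by ring, Real.rpow_add hb, Real.rpow_one]
    rw [e, ← mul_assoc]
    have h1 : (1:ℝ) + q*t^2 ≤ 1 + q^2*t^2 := by nlinarith [sq_nonneg t]
    have hpow : (0:ℝ) ≤ 2 * (1+q*t^2) ^ ((q-3)/2) :=
      mul_nonneg (by norm_num) (Real.rpow_nonneg hb.le _)
    exact mul_le_mul_of_nonneg_left h1 hpow
  have hcore : (1+t) ^ (q-1) + (1-t) ^ (q-1) ≤ 2 * (1+q*t^2) ^ ((q-1)/2) := by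
    rcases le_or_gt q 3 with h3 | h3
    · rcases le_or_gt q 2 with h2 | h2
      · have hle2 : (1+t) ^ (q-1) + (1-t) ^ (q-1) ≤ 2 := by
          rcases eq_or_lt_of_le hq with h1 | h1
          · rw [← h1]; norm_num
          · have hr0 : 0 < q - 1 := by linarith
            have h := bcl_l1 (by linarith : (0:ℝ) ≤ 1+t) (by linarith : (0:ℝ) ≤ 1-t) hr0
              (by linarith : q - 1 ≤ 1)
            have he : (1+t) + (1-t) = (2:ℝ) := by ring
            rw [he] at h
            have h2' : (2:ℝ) ^ (1-(q-1)) * 2 ^ (q-1) = 2 := by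
              rw [← Real.rpow_add (by norm_num)]; norm_num
            rw [← h2']; exact h
        refine hle2.trans ?_
        nth_rewrite 1 [← mul_one 2]
        refine mul_le_mul_of_nonneg_left ?_ (by norm_num)
        calc (1:ℝ) = 1 ^ ((q-1)/2) := (Real.one_rpow _).symm
          _ ≤ (1+q*t^2) ^ ((q-1)/2) := Real.rpow_le_rpow (by norm_num) hb1 (by linarith)
      · have hs0 : 0 < (q-1)/2 := by linarith
        have hs1 : (q-1)/2 ≤ 1 := by linarith
        have h := bcl_l1 (sq_nonneg (1+t)) (sq_nonneg (1-t)) hs0 hs1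
        have he : ((1+t)^2 + (1-t)^2) = 2*(1+t^2) := by ring
        rw [he] at h
        have e1 : ((1+t)^2 : ℝ) ^ ((q-1)/2) = (1+t) ^ (q-1) := by
          rw [← Real.rpow_natCast (1+t) 2, ← Real.rpow_mul (by linarith)]
          congr 1; push_cast; ring
        have e2 : ((1-t)^2 : ℝ) ^ ((q-1)/2) = (1-t) ^ (q-1) := by
          rw [← Real.rpow_natCast (1-t) 2, ← Real.rpow_mul (by linarith)]
          congr 1; push_cast; ring
        rw [e1, e2] at h
        have e3 : (2:ℝ) ^ (1-(q-1)/2) * (2*(1+t^2)) ^ ((q-1)/2)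
            = 2 * (1+t^2) ^ ((q-1)/2) := by
          rw [Real.mul_rpow (by norm_num) (by nlinarith [sq_nonneg t]),
            ← mul_assoc, ← Real.rpow_add (by norm_num)]
          norm_num
        rw [e3] at h
        refine h.trans ?_
        refine mul_le_mul_of_nonneg_left ?_ (by norm_num)
        exact Real.rpow_le_rpow (by nlinarith [sq_nonneg t])
          (by nlinarith [sq_nonneg t]) (by linarith)
    · have hm := hmain h3 t ht0 ht1
      have e : q - 1 - 1 = q - 2 := by ring
      rw [e] at hm
      refine hm.trans ?_
      refine mul_le_mul_of_nonneg_left ?_ (by norm_num)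
      exact Real.rpow_le_rpow (by nlinarith [sq_nonneg t])
        (by nlinarith [sq_nonneg t]) (by linarith)
  exact hcore.trans hstep

lemma bcl_K {q : ℝ} (hq : 1 ≤ q) (hmain : 3 < q → BCLMain (q-1)) {t : ℝ}
    (ht0 : 0 ≤ t) (ht1 : t ≤ 1) :
    (1+t) ^ q - (1-t) ^ q ≤ 2*q*t*(1+q*t^2) ^ ((q-1)/2) := by
  set f : ℝ → ℝ := fun t => 2*q*t*(1+q*t^2) ^ ((q-1)/2) - (1+t) ^ q + (1-t) ^ q with hf
  have hder : ∀ x ∈ Set.Ioo (0:ℝ) 1, HasDerivAt f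
      (q*(2*(1+q*x^2) ^ ((q-3)/2)*(1+q^2*x^2) - ((1+x) ^ (q-1) + (1-x) ^ (q-1)))) x := by
    intro x hx
    obtain ⟨hx0, hx1⟩ := hx
    have hbx : (0:ℝ) < 1 + q*x^2 := by nlinarith [sq_nonneg x]
    have hA : HasDerivAt (fun t:ℝ => 1+q*t^2) (q*(2*x^1)) x :=
      ((hasDerivAt_pow 2 x).const_mul q).const_add 1
    have hB : HasDerivAt (fun t:ℝ => (1+q*t^2) ^ ((q-1)/2))
        ((q*(2*x^1)) * ((q-1)/2) * (1+q*x^2) ^ ((q-1)/2 - 1)) x :=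
      hA.rpow_const (Or.inl hbx.ne')
    have hC : HasDerivAt (fun t:ℝ => 2*q*t) (2*q*1) x := (hasDerivAt_id x).const_mul (2*q)
    have hD := hC.mul hB
    have hE : HasDerivAt (fun t:ℝ => (1+t) ^ q) (1 * q * (1+x) ^ (q-1)) x :=
      ((hasDerivAt_id x).const_add 1).rpow_const (Or.inl (by positivity : (0:ℝ) < 1+x).ne')
    have hF : HasDerivAt (fun t:ℝ => (1-t) ^ q) ((-1) * q * (1-x) ^ (q-1)) x :=
      ((hasDerivAt_id x).const_sub 1).rpow_const (Or.inl (by linarith : (0:ℝ) < 1-x).ne')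
    have h := (hD.sub hE).add hF
    refine h.congr_deriv ?_
    have e1 : (1+q*x^2) ^ ((q-1)/2) = (1+q*x^2) ^ ((q-3)/2) * (1+q*x^2) := by
      rw [show (q-1)/2 = (q-3)/2 + 1 by ring, Real.rpow_add hbx, Real.rpow_one]
    have e2 : (q-1)/2 - 1 = (q-3)/2 := by ring
    rw [e2, e1]
    ring
  have hcont : ContinuousOn f (Set.Icc 0 1) := by
    have c0 : Continuous fun t:ℝ => 1+q*t^2 := by continuity
    have c1 : Continuous fun t:ℝ => (1+q*t^2) ^ ((q-1)/2) :=
      (Real.continuous_rpow_const (by linarith)).comp c0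
    have c2 : Continuous fun t:ℝ => (1+t) ^ q :=
      (Real.continuous_rpow_const (by linarith)).comp (by continuity)
    have c3 : Continuous fun t:ℝ => (1-t) ^ q :=
      (Real.continuous_rpow_const (by linarith)).comp (by continuity)
    exact ((((continuous_const.mul continuous_id).mul c1).sub c2).add c3).continuousOn
  have hmono : MonotoneOn f (Set.Icc 0 1) := by
    refine monotoneOn_of_deriv_nonneg (convex_Icc 0 1) hcont ?_ ?_
    · intro x hx
      rw [interior_Icc] at hx
      exact (hder x hx).differentiableAt.differentiableWithinAt
    · intro x hx
      rw [interior_Icc] at hx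
      rw [(hder x hx).deriv]
      have hk2 := bcl_K2 hq hx.1.le hx.2.le hmain
      have : (0:ℝ) ≤ q := by linarith
      nlinarith [hk2]
  have h0 : f 0 = 0 := by
    simp [hf, Real.one_rpow]
  have := hmono (Set.mem_Icc.mpr ⟨le_refl 0, by norm_num⟩) (Set.mem_Icc.mpr ⟨ht0, ht1⟩) ht0
  rw [h0] at this
  simp only [hf] at this
  linarith

lemma bcl_main_of_K {p : ℝ} (hp : 2 ≤ p) (hmain : 3 < p - 1 → BCLMain (p-1-1)) :
    BCLMain p := by
  intro t ht0 ht1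
  have hq : 1 ≤ p - 1 := by linarith
  set q := p - 1 with hqdef
  set F : ℝ → ℝ := fun t => 2*(1+q*t^2) ^ (p/2) - (1+t) ^ p - (1-t) ^ p with hF
  have hder : ∀ x ∈ Set.Ioo (0:ℝ) 1, HasDerivAt F
      (p*(2*q*x*(1+q*x^2) ^ ((q-1)/2) - ((1+x) ^ q - (1-x) ^ q))) x := by
    intro x hx
    obtain ⟨hx0, hx1⟩ := hx
    have hbx : (0:ℝ) < 1 + q*x^2 := by nlinarith [sq_nonneg x]
    have hA : HasDerivAt (fun t:ℝ => 1+q*t^2) (q*(2*x^1)) x :=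
      ((hasDerivAt_pow 2 x).const_mul q).const_add 1
    have hB : HasDerivAt (fun t:ℝ => 2*(1+q*t^2) ^ (p/2))
        (2*((q*(2*x^1)) * (p/2) * (1+q*x^2) ^ (p/2 - 1))) x :=
      (hA.rpow_const (Or.inl hbx.ne')).const_mul 2
    have hE : HasDerivAt (fun t:ℝ => (1+t) ^ p) (1 * p * (1+x) ^ (p-1)) x :=
      ((hasDerivAt_id x).const_add 1).rpow_const (Or.inl (by positivity : (0:ℝ) < 1+x).ne')
    have hF' : HasDerivAt (fun t:ℝ => (1-t) ^ p) ((-1) * p * (1-x) ^ (p-1)) x :=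
      ((hasDerivAt_id x).const_sub 1).rpow_const (Or.inl (by linarith : (0:ℝ) < 1-x).ne')
    have h := (hB.sub hE).sub hF'
    refine h.congr_deriv ?_
    have e2 : p/2 - 1 = (q-1)/2 := by rw [hqdef]; ring
    rw [e2, hqdef]
    ring
  have hcont : ContinuousOn F (Set.Icc 0 1) := by
    have c0 : Continuous fun t:ℝ => 1+q*t^2 := by continuity
    have c1 : Continuous fun t:ℝ => (1+q*t^2) ^ (p/2) :=
      (Real.continuous_rpow_const (by linarith)).comp c0
    have c2 : Continuous fun t:ℝ => (1+t) ^ p :=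
      (Real.continuous_rpow_const (by linarith)).comp (by continuity)
    have c3 : Continuous fun t:ℝ => (1-t) ^ p :=
      (Real.continuous_rpow_const (by linarith)).comp (by continuity)
    exact (((continuous_const.mul c1).sub c2).sub c3).continuousOn
  have hmono : MonotoneOn F (Set.Icc 0 1) := by
    refine monotoneOn_of_deriv_nonneg (convex_Icc 0 1) hcont ?_ ?_
    · intro x hx
      rw [interior_Icc] at hx
      exact (hder x hx).differentiableAt.differentiableWithinAt
    · intro x hx
      rw [interior_Icc] at hx
      rw [(hder x hx).deriv]
      have hk := bcl_K hq hmain hx.1.le hx.2.le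
      have hp0 : (0:ℝ) ≤ p := by linarith
      nlinarith [hk]
  have h0 : F 0 = 0 := by
    simp [hF, Real.one_rpow]
    norm_num
  have := hmono (Set.mem_Icc.mpr ⟨le_refl 0, by norm_num⟩) (Set.mem_Icc.mpr ⟨ht0, ht1⟩) ht0
  rw [h0] at this
  simp only [hF] at this
  linarith

lemma bcl_main {p : ℝ} (hp : 2 ≤ p) : BCLMain p := by
  obtain ⟨n, hn⟩ := exists_nat_ge p
  have key : ∀ n : ℕ, ∀ p : ℝ, 2 ≤ p → p ≤ 2*n + 4 → BCLMain p := by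
    intro n
    induction n with
    | zero =>
      intro p hp2 hp4
      refine bcl_main_of_K hp2 (fun h3 => absurd h3 ?_)
      push_cast at hp4
      linarith
    | succ m ih =>
      intro p hp2 hp4
      rcases le_or_gt p (2*m+4) with h | h
      · exact ih p hp2 h
      · refine bcl_main_of_K hp2 (fun h3 => ?_)
        have e : p - 1 - 1 = p - 2 := by ring
        rw [e]
        refine ih (p-2) (by linarith) ?_
        push_cast at hp4 ⊢
        linarith
  exact key n p hp (by linarith)

lemma bcl_scalar {p a b : ℝ} (hp : 2 ≤ p) (hb0 : 0 ≤ b) (hba : b ≤ a) :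
    (a+b) ^ p + (a-b) ^ p ≤ 2 * (a^2 + (p-1)*b^2) ^ (p/2) := by
  have ha0 : 0 ≤ a := hb0.trans hba
  rcases eq_or_lt_of_le ha0 with h0 | h0
  · have hb : b = 0 := le_antisymm (by linarith) hb0
    have hpne : p ≠ 0 := by linarith
    rw [← h0, hb]
    norm_num
    rw [Real.zero_rpow hpne, Real.zero_rpow (by linarith : p/2 ≠ 0)]
    norm_num
  · have ht0 : 0 ≤ b / a := div_nonneg hb0 h0.le
    have ht1 : b / a ≤ 1 := (div_le_one h0).mpr hba
    have h := bcl_main hp (b/a) ht0 ht1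
    have hap : 0 < a ^ p := Real.rpow_pos_of_pos h0 p
    have key := mul_le_mul_of_nonneg_left h hap.le
    have e1 : a ^ p * ((1 + b/a) ^ p) = (a+b) ^ p := by
      rw [← Real.mul_rpow h0.le (by positivity)]
      congr 1; field_simp
    have e2 : a ^ p * ((1 - b/a) ^ p) = (a-b) ^ p := by
      rw [← Real.mul_rpow h0.le (by rw [sub_nonneg, div_le_one h0]; exact hba)]
      congr 1; field_simp
    have e3 : a ^ p * (2 * (1 + (p-1)*(b/a)^2) ^ (p/2)) = 2 * (a^2 + (p-1)*b^2) ^ (p/2) := by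
      have eap : a ^ p = (a^2 : ℝ) ^ (p/2) := by
        rw [← Real.rpow_natCast a 2, ← Real.rpow_mul h0.le]
        congr 1; ring
      have hT : (0:ℝ) ≤ 1 + (p-1)*(b/a)^2 := by nlinarith [sq_nonneg (b/a)]
      calc a ^ p * (2 * (1 + (p-1)*(b/a)^2) ^ (p/2))
          = 2 * ((a^2 : ℝ) ^ (p/2) * (1 + (p-1)*(b/a)^2) ^ (p/2)) := by rw [eap]; ring
        _ = 2 * ((a^2 * (1 + (p-1)*(b/a)^2)) ^ (p/2)) := by
            rw [Real.mul_rpow (by positivity) hT]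
        _ = 2 * (a^2 + (p-1)*b^2) ^ (p/2) := by
            congr 2
            field_simp
    rw [mul_add, e1, e2, e3] at key
    exact key

open RealInnerProductSpace in
lemma bcl_vector_aux {E : Type*} [NormedAddCommGroup E] [InnerProductSpace ℝ E]
    {p : ℝ} (hp : 2 ≤ p) (x y : E) (hxy : 0 ≤ ⟪x, y⟫) :
    ‖x+y‖ ^ p + ‖x-y‖ ^ p ≤ 2 * (‖x‖^2 + (p-1)*‖y‖^2) ^ (p/2) := by
  set tt := ⟪x, y⟫ with htt_def
  set S := ‖x‖^2 + ‖y‖^2 with hS_def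
  have hS0 : 0 ≤ S := by positivity
  have htt : tt ≤ ‖x‖ * ‖y‖ := real_inner_le_norm x y
  have h2tt : 2*tt ≤ S := by nlinarith [sq_nonneg (‖x‖ - ‖y‖)]
  have hSD : 0 ≤ S^2 - 4*tt^2 := by nlinarith
  set D := Real.sqrt (S^2 - 4*tt^2) with hD_def
  have hD0 : 0 ≤ D := Real.sqrt_nonneg _
  have hD2 : D^2 = S^2 - 4*tt^2 := Real.sq_sqrt hSD
  have hDS : D ≤ S := by
    rw [hD_def]
    calc Real.sqrt (S^2 - 4*tt^2) ≤ Real.sqrt (S^2) := Real.sqrt_le_sqrt (by nlinarith)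
      _ = S := Real.sqrt_sq hS0
  set a := Real.sqrt ((S+D)/2) with ha_def
  set b := Real.sqrt ((S-D)/2) with hb_def
  have ha0 : 0 ≤ a := Real.sqrt_nonneg _
  have hb0 : 0 ≤ b := Real.sqrt_nonneg _
  have ha2 : a^2 = (S+D)/2 := Real.sq_sqrt (by linarith)
  have hb2 : b^2 = (S-D)/2 := Real.sq_sqrt (by linarith)
  have hba : b ≤ a := Real.sqrt_le_sqrt (by linarith)
  have hab : a * b = tt := by
    rw [ha_def, hb_def, ← Real.sqrt_mul (by linarith) _]
    have e : (S+D)/2 * ((S-D)/2) = tt^2 := by linear_combination (-(1:ℝ)/4) * hD2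
    rw [e, Real.sqrt_sq hxy]
  have hxpy : ‖x+y‖ = a + b := by
    have e : ‖x+y‖^2 = (a+b)^2 := by
      rw [norm_add_sq_real]
      linear_combination -ha2 - hb2 - 2*hab
    calc ‖x+y‖ = Real.sqrt (‖x+y‖^2) := (Real.sqrt_sq (norm_nonneg _)).symm
      _ = Real.sqrt ((a+b)^2) := by rw [e]
      _ = a + b := Real.sqrt_sq (by linarith)
  have hxmy : ‖x-y‖ = a - b := by
    have e : ‖x-y‖^2 = (a-b)^2 := by
      rw [norm_sub_sq_real]
      linear_combination -ha2 - hb2 + 2*hab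
    calc ‖x-y‖ = Real.sqrt (‖x-y‖^2) := (Real.sqrt_sq (norm_nonneg _)).symm
      _ = Real.sqrt ((a-b)^2) := by rw [e]
      _ = a - b := Real.sqrt_sq (by linarith)
  have hb_le : b^2 ≤ ‖y‖^2 := by
    have h1 : (‖x‖^2 - ‖y‖^2)^2 ≤ S^2 - 4*tt^2 := by nlinarith [norm_nonneg x, norm_nonneg y]
    have h2 : ‖x‖^2 - ‖y‖^2 ≤ D := by
      refine le_trans (le_abs_self _) ?_
      rw [← Real.sqrt_sq_eq_abs, hD_def]
      exact Real.sqrt_le_sqrt h1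
    rw [hb2, hS_def]
    linarith
  rw [hxpy, hxmy]
  refine (bcl_scalar hp hb0 hba).trans ?_
  refine mul_le_mul_of_nonneg_left (Real.rpow_le_rpow (by nlinarith) ?_ (by linarith)) (by norm_num)
  nlinarith [hb_le, ha2, hb2]

open RealInnerProductSpace in
lemma bcl_vector {E : Type*} [NormedAddCommGroup E] [InnerProductSpace ℝ E]
    {p : ℝ} (hp : 2 ≤ p) (x y : E) :
    ‖x+y‖ ^ p + ‖x-y‖ ^ p ≤ 2 * (‖x‖^2 + (p-1)*‖y‖^2) ^ (p/2) := by
  rcases le_or_gt 0 ⟪x, y⟫ with h | h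
  · exact bcl_vector_aux hp x y h
  · have h' : 0 ≤ ⟪x, -y⟫ := by rw [inner_neg_right]; linarith
    have := bcl_vector_aux hp x (-y) h'
    rw [← sub_eq_add_neg, sub_neg_eq_add, norm_neg] at this
    linarith

lemma bcl_l2 {u v s : ℝ} (hu : 0 ≤ u) (hv : 0 ≤ v) (hs : 1 ≤ s) :
    (u+v) ^ s ≤ 2 ^ (s-1) * (u ^ s + v ^ s) := by
  lift u to NNReal using hu
  lift v to NNReal using hv
  have key := NNReal.rpow_add_le_mul_rpow_add_rpow u v hs
  calc ((u:ℝ) + v) ^ s = (((u + v : NNReal) : ℝ)) ^ s := by push_cast; ring_nf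
    _ = (((u+v) ^ s : NNReal) : ℝ) := by rw [NNReal.coe_rpow]
    _ ≤ (((2:NNReal) ^ (s-1) * (u ^ s + v ^ s) : NNReal) : ℝ) := by exact_mod_cast key
    _ = 2 ^ (s-1) * ((u:ℝ) ^ s + (v:ℝ) ^ s) := by push_cast [NNReal.coe_rpow]; ring

open MeasureTheory

theorem stmt11 {Ω : Type*} [MeasurableSpace Ω] {μ : Measure Ω} [IsProbabilityMeasure μ]
    {d : ℕ} (p : ℝ) (hp : 2 ≤ p)
    (X Y : Ω → EuclideanSpace ℝ (Fin d))
    (hXp : MemLp X (ENNReal.ofReal p) μ) (hYp : MemLp Y (ENNReal.ofReal p) μ) :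
    ((∫ ω, ‖X ω + Y ω‖ ^ p ∂μ) ^ (1 / p)) ^ 2
        + ((∫ ω, ‖X ω - Y ω‖ ^ p ∂μ) ^ (1 / p)) ^ 2
      ≤ 2 * ((∫ ω, ‖X ω‖ ^ p ∂μ) ^ (1 / p)) ^ 2
        + 2 * (p - 1) * ((∫ ω, ‖Y ω‖ ^ p ∂μ) ^ (1 / p)) ^ 2 := by
  have hp0 : (0:ℝ) < p := by linarith
  have hpe0 : (ENNReal.ofReal p) ≠ 0 := by
    simp [ENNReal.ofReal_eq_zero]; linarith
  have hpet : (ENNReal.ofReal p) ≠ ⊤ := ENNReal.ofReal_ne_top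
  have htoReal : (ENNReal.ofReal p).toReal = p := ENNReal.toReal_ofReal hp0.le
  -- integrability
  have iXY : Integrable (fun ω => ‖X ω + Y ω‖ ^ p) μ := by
    have h := (hXp.add hYp).integrable_norm_rpow hpe0 hpet
    rwa [htoReal] at h
  have iXmY : Integrable (fun ω => ‖X ω - Y ω‖ ^ p) μ := by
    have h := (hXp.sub hYp).integrable_norm_rpow hpe0 hpet
    rwa [htoReal] at h
  have iX : Integrable (fun ω => ‖X ω‖ ^ p) μ := by
    have h := hXp.integrable_norm_rpow hpe0 hpet
    rwa [htoReal] at h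
  have iY : Integrable (fun ω => ‖Y ω‖ ^ p) μ := by
    have h := hYp.integrable_norm_rpow hpe0 hpet
    rwa [htoReal] at h
  -- the combined function
  set g : Ω → ℝ := fun ω => (‖X ω‖^2 + (p-1)*‖Y ω‖^2) ^ (p/2) with hg_def
  have hw_nonneg : ∀ ω, (0:ℝ) ≤ ‖X ω‖^2 + (p-1)*‖Y ω‖^2 := by
    intro ω
    nlinarith [sq_nonneg ‖X ω‖, sq_nonneg ‖Y ω‖]
  have hg_nonneg : ∀ ω, 0 ≤ g ω := fun ω => Real.rpow_nonneg (hw_nonneg ω) _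
  have hXm : AEMeasurable (fun ω => ‖X ω‖) μ := hXp.aestronglyMeasurable.norm.aemeasurable
  have hYm : AEMeasurable (fun ω => ‖Y ω‖) μ := hYp.aestronglyMeasurable.norm.aemeasurable
  have hwm : AEMeasurable (fun ω => ‖X ω‖^2 + (p-1)*‖Y ω‖^2) μ :=
    (hXm.pow_const 2).add ((hYm.pow_const 2).const_mul (p-1))
  have hgm : AEMeasurable g μ :=
    (Real.continuous_rpow_const (by linarith : (0:ℝ) ≤ p/2)).measurable.comp_aemeasurable hwm
  -- pointwise identities for powers
  have eXpow : ∀ ω, ((‖X ω‖^2 : ℝ)) ^ (p/2) = ‖X ω‖ ^ p := by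
    intro ω
    rw [← Real.rpow_natCast ‖X ω‖ 2, ← Real.rpow_mul (norm_nonneg _)]
    congr 1; push_cast; ring
  have eYpow : ∀ ω, (((p-1)*‖Y ω‖^2 : ℝ)) ^ (p/2) = (p-1)^(p/2) * ‖Y ω‖ ^ p := by
    intro ω
    rw [Real.mul_rpow (by linarith) (sq_nonneg _), ← Real.rpow_natCast ‖Y ω‖ 2,
      ← Real.rpow_mul (norm_nonneg _)]
    congr 2; push_cast; ring
  -- integrability of g
  have ig : Integrable g μ := by
    refine Integrable.mono'
      (g := fun ω => 2^(p/2-1) * (‖X ω‖ ^ p + (p-1)^(p/2) * ‖Y ω‖ ^ p))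
      ((iX.add (iY.const_mul _)).const_mul _) hgm.aestronglyMeasurable ?_
    filter_upwards with ω
    rw [Real.norm_eq_abs, abs_of_nonneg (hg_nonneg ω)]
    calc g ω ≤ 2^(p/2-1) * ((‖X ω‖^2 : ℝ) ^ (p/2) + ((p-1)*‖Y ω‖^2 : ℝ) ^ (p/2)) :=
          bcl_l2 (sq_nonneg _) (by nlinarith [sq_nonneg ‖Y ω‖]) (by linarith)
      _ = 2^(p/2-1) * (‖X ω‖ ^ p + (p-1)^(p/2) * ‖Y ω‖ ^ p) := by rw [eXpow, eYpow]
  -- step 1 : pointwise + integral mono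
  have hpt : ∀ ω, ‖X ω + Y ω‖ ^ p + ‖X ω - Y ω‖ ^ p ≤ 2 * g ω := fun ω =>
    bcl_vector hp (X ω) (Y ω)
  have hAB : (∫ ω, ‖X ω + Y ω‖ ^ p ∂μ) + (∫ ω, ‖X ω - Y ω‖ ^ p ∂μ) ≤ 2 * ∫ ω, g ω ∂μ := by
    rw [← integral_add iXY iXmY, ← integral_const_mul]
    exact integral_mono (iXY.add iXmY) (ig.const_mul 2) hpt
  -- notation for the four integrals
  set A := ∫ ω, ‖X ω + Y ω‖ ^ p ∂μ with hA_def
  set B := ∫ ω, ‖X ω - Y ω‖ ^ p ∂μ with hB_def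
  set G := ∫ ω, g ω ∂μ with hG_def
  set IX := ∫ ω, ‖X ω‖ ^ p ∂μ with hIX_def
  set IY := ∫ ω, ‖Y ω‖ ^ p ∂μ with hIY_def
  have hA0 : 0 ≤ A := integral_nonneg fun ω => Real.rpow_nonneg (norm_nonneg _) _
  have hB0 : 0 ≤ B := integral_nonneg fun ω => Real.rpow_nonneg (norm_nonneg _) _
  have hG0 : 0 ≤ G := integral_nonneg hg_nonneg
  have hIX0 : 0 ≤ IX := integral_nonneg fun ω => Real.rpow_nonneg (norm_nonneg _) _
  have hIY0 : 0 ≤ IY := integral_nonneg fun ω => Real.rpow_nonneg (norm_nonneg _) _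
  -- step 2 : concavity
  have hs0 : (0:ℝ) < 2/p := by positivity
  have hs1 : (2:ℝ)/p ≤ 1 := by rw [div_le_one hp0]; linarith
  have step2 : A ^ (2/p) + B ^ (2/p) ≤ 2 * G ^ (2/p) := by
    have h1 := bcl_l1 hA0 hB0 hs0 hs1
    have h2 : (A + B) ^ (2/p) ≤ (2*G) ^ (2/p) :=
      Real.rpow_le_rpow (by linarith) hAB (by positivity)
    have h3 : (2:ℝ) ^ (1-2/p) * (2*G) ^ (2/p) = 2 * G ^ (2/p) := by
      rw [Real.mul_rpow (by norm_num) hG0, ← mul_assoc, ← Real.rpow_add (by norm_num)]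
      norm_num
    calc A ^ (2/p) + B ^ (2/p) ≤ 2 ^ (1-2/p) * (A + B) ^ (2/p) := h1
      _ ≤ 2 ^ (1-2/p) * (2*G) ^ (2/p) := by
          refine mul_le_mul_of_nonneg_left h2 (Real.rpow_nonneg (by norm_num) _)
      _ = 2 * G ^ (2/p) := h3
  -- step 3 : Minkowski for exponent p/2
  have step3 : G ^ (2/p) ≤ IX ^ (2/p) + (p-1) * IY ^ (2/p) := by
    have hr1 : (1:ℝ) ≤ p/2 := by linarith
    have hr0 : (0:ℝ) < p/2 := by linarith
    set fe : Ω → ENNReal := fun ω => ENNReal.ofReal (‖X ω‖^2) with hfe_def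
    set ge : Ω → ENNReal := fun ω => ENNReal.ofReal ((p-1)*‖Y ω‖^2) with hge_def
    have hfem : AEMeasurable fe μ := (hXm.pow_const 2).ennreal_ofReal
    have hgem : AEMeasurable ge μ := ((hYm.pow_const 2).const_mul (p-1)).ennreal_ofReal
    have mink := ENNReal.lintegral_Lp_add_le hfem hgem hr1
    have eL : (∫⁻ ω, ((fe + ge) ω) ^ (p/2) ∂μ) = ENNReal.ofReal G := by
      rw [hG_def, ofReal_integral_eq_lintegral_ofReal ig (Filter.Eventually.of_forall hg_nonneg)]
      refine lintegral_congr fun ω => ?_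
      simp only [hfe_def, hge_def, Pi.add_apply]
      rw [← ENNReal.ofReal_add (sq_nonneg _) (by nlinarith [sq_nonneg ‖Y ω‖]),
        ENNReal.ofReal_rpow_of_nonneg (hw_nonneg ω) hr0.le]
    have eX : (∫⁻ ω, (fe ω) ^ (p/2) ∂μ) = ENNReal.ofReal IX := by
      rw [hIX_def, ofReal_integral_eq_lintegral_ofReal iX
        (Filter.Eventually.of_forall fun ω => Real.rpow_nonneg (norm_nonneg _) _)]
      refine lintegral_congr fun ω => ?_
      rw [hfe_def, ENNReal.ofReal_rpow_of_nonneg (sq_nonneg _) hr0.le, eXpow]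
    have iYc : Integrable (fun ω => (p-1)^(p/2) * ‖Y ω‖ ^ p) μ := iY.const_mul _
    have eY : (∫⁻ ω, (ge ω) ^ (p/2) ∂μ) = ENNReal.ofReal ((p-1)^(p/2) * IY) := by
      have : (p-1)^(p/2) * IY = ∫ ω, (p-1)^(p/2) * ‖Y ω‖ ^ p ∂μ := by
        rw [hIY_def, integral_const_mul]
      rw [this, ofReal_integral_eq_lintegral_ofReal iYc
        (Filter.Eventually.of_forall fun ω =>
          mul_nonneg (Real.rpow_nonneg (by linarith) _) (Real.rpow_nonneg (norm_nonneg _) _))]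
      refine lintegral_congr fun ω => ?_
      rw [hge_def, ENNReal.ofReal_rpow_of_nonneg (by nlinarith [sq_nonneg ‖Y ω‖]) hr0.le, eYpow]
    rw [eL, eX, eY] at mink
    have h2p : 1/(p/2) = 2/p := by field_simp
    rw [h2p] at mink
    rw [ENNReal.ofReal_rpow_of_nonneg hG0 hs0.le,
      ENNReal.ofReal_rpow_of_nonneg hIX0 hs0.le,
      ENNReal.ofReal_rpow_of_nonneg (mul_nonneg (Real.rpow_nonneg (by linarith) _) hIY0) hs0.le,
      ← ENNReal.ofReal_add (Real.rpow_nonneg hIX0 _) (Real.rpow_nonneg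
        (mul_nonneg (Real.rpow_nonneg (by linarith) _) hIY0) _)] at mink
    have := (ENNReal.ofReal_le_ofReal_iff (add_nonneg (Real.rpow_nonneg hIX0 _)
      (Real.rpow_nonneg (mul_nonneg (Real.rpow_nonneg (by linarith) _) hIY0) _))).mp mink
    refine this.trans ?_
    have e : ((p-1)^(p/2) * IY) ^ (2/p) = (p-1) * IY ^ (2/p) := by
      rw [Real.mul_rpow (Real.rpow_nonneg (by linarith) _) hIY0,
        ← Real.rpow_mul (by linarith : (0:ℝ) ≤ p-1)]
      congr 2
      field_simp
      norm_num
    rw [e]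
  -- assemble
  have conv : ∀ W : ℝ, 0 ≤ W → (W ^ (1/p)) ^ 2 = W ^ (2/p) := by
    intro W hW
    rw [← Real.rpow_natCast (W ^ (1/p)) 2, ← Real.rpow_mul hW]
    congr 1; push_cast; ring
  rw [conv A hA0, conv B hB0, conv IX hIX0, conv IY hIY0]
  have final : 2 * G ^ (2/p) ≤ 2 * IX ^ (2/p) + 2*(p-1) * IY ^ (2/p) := by linarith
  linarith
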